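/- Let λ = gcd(p',q') divide n+1 = p'+q'. If λ ≥ 2, the permutation g on [0,n-1] is not cyclic, since 0 and 1 lie in different orbits (all elements of the orbit of 0 are ≡ 0 mod λ). -/
import Mathlib


def g (p' q' i : ℕ) : ℕ :=
  if i + 1 < q' then i + p' else if i + 1 = q' then p' - 1 else i - q'

lemma mul_sub_one_mod (l m : ℕ) (hl : 1 ≤ l) (hm : 1 ≤ m) :
    (l * m - 1) % l = l - 1 := by
  rcases m with _ | k
  · omega
  · have h : l * (k + 1) = l * k + l := by ring
    have h2 : l * (k + 1) - 1 = l * k + (l - 1) := by omega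
    rw [h2, Nat.mul_add_mod, Nat.mod_eq_of_lt (by omega)]

lemma g_mod (p' q' l : ℕ) (hp : 1 ≤ p') (hq : 1 ≤ q') (hl : 2 ≤ l)
    (hpl : l ∣ p') (hql : l ∣ q') (i : ℕ) : g p' q' i % l = i % l := by
  obtain ⟨a, ha⟩ := hpl
  obtain ⟨b, hb⟩ := hql
  unfold g
  split_ifs with h1 h2
  · rw [ha, Nat.add_mul_mod_self_left]
  · have ha1 : 1 ≤ a := by nlinarith
    have hb1 : 1 ≤ b := by nlinarith
    have hi : i = l * b - 1 := by omega
    rw [hi, ha, mul_sub_one_mod l a (by omega) ha1,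
      mul_sub_one_mod l b (by omega) hb1]
  · obtain ⟨c, rfl⟩ : ∃ c, i = c + q' := ⟨i - q', by omega⟩
    rw [Nat.add_sub_cancel, hb, Nat.add_mul_mod_self_left]

theorem stmt_17 (p' q' n : ℕ) (hp : 1 ≤ p') (hq : 1 ≤ q') (hn : p' + q' - 1 = n)
    (hl : 2 ≤ Nat.gcd p' q') :
    (¬ ∃ k : ℕ, (g p' q')^[k] 0 = 1) ∧
    ¬ (∀ i < n, ∀ j < n, ∃ k : ℕ, (g p' q')^[k] i = j) := by
  have hpl : Nat.gcd p' q' ∣ p' := Nat.gcd_dvd_left p' q'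
  have hql : Nat.gcd p' q' ∣ q' := Nat.gcd_dvd_right p' q'
  have key : ∀ k : ℕ, (g p' q')^[k] 0 % Nat.gcd p' q' = 0 := by
    intro k
    induction k with
    | zero => simp
    | succ k ih => rw [Function.iterate_succ_apply', g_mod p' q' _ hp hq hl hpl hql, ih]
  have h1 : ¬ ∃ k : ℕ, (g p' q')^[k] 0 = 1 := by
    rintro ⟨k, hk⟩
    have := key k
    rw [hk, Nat.mod_eq_of_lt (by omega)] at this
    omega
  refine ⟨h1, fun h => h1 ?_⟩
  have hp2 : 2 ≤ p' := le_trans hl (Nat.le_of_dvd (by omega) hpl)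
  have hq2 : 2 ≤ q' := le_trans hl (Nat.le_of_dvd (by omega) hql)
  exact h 0 (by omega) 1 (by omega)
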